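/- Let ν be an absolutely continuous finite measure on ℝ² whose density is bounded above by 1 and bounded below by 1/8 on its support Δ = {(E,t) : |E| ≤ 1, 0 ≤ t ≤ 1 − E²}. For 0 < δ < 1 let ν_δ = ν * γ_δ be the convolution with linear measure γ_δ on [−δ,δ]×{0}. Then ν_{δ₀} has density bounded above by 2δ₀ on ℝ², and for any 0 < δ₀ < δ₁ < 1 there exists C₁ ≥ 1 such that ν_{δ₁} has density at least (δ₁−δ₀)/10 on the rectangle [−1−δ₀, 1+δ₀] × [0, C₁⁻¹]. -/
import Mathlib


open MeasureTheory

/-- Let `ν` be a measure on `ℝ²` with density `f` supported on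
`Δ = {(E,t) : |E| ≤ 1, 0 ≤ t ≤ 1 - E²}`, bounded above by `1` and below by `1/8` on `Δ`.
The density of the convolution `ν_δ = ν * γ_δ` with linear measure on `[-δ,δ] × {0}` is
`g δ (E,t) = ∫_{-δ}^{δ} f(E-s, t) ds`. Then `g δ₀ ≤ 2δ₀` everywhere, and for
`0 < δ₀ < δ₁ < 1` there is `C₁ ≥ 1` with `g δ₁ ≥ (δ₁-δ₀)/10` on
`[-1-δ₀, 1+δ₀] × [0, C₁⁻¹]`. -/
theorem stmt10 (f : ℝ × ℝ → ℝ) (hf_meas : Measurable f) (hf_nonneg : ∀ p, 0 ≤ f p)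
    (Δ : Set (ℝ × ℝ)) (hΔ : Δ = {p : ℝ × ℝ | |p.1| ≤ 1 ∧ 0 ≤ p.2 ∧ p.2 ≤ 1 - p.1 ^ 2})
    (h_upper : ∀ p ∈ Δ, f p ≤ 1) (h_lower : ∀ p ∈ Δ, 1 / 8 ≤ f p)
    (h_supp : ∀ p ∉ Δ, f p = 0)
    (g : ℝ → ℝ × ℝ → ℝ) (hg : ∀ δ p, g δ p = ∫ s in (-δ)..δ, f (p.1 - s, p.2)) :
    (∀ δ₀ : ℝ, 0 < δ₀ → δ₀ < 1 → ∀ p, g δ₀ p ≤ 2 * δ₀) ∧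
    (∀ δ₀ δ₁ : ℝ, 0 < δ₀ → δ₀ < δ₁ → δ₁ < 1 → ∃ C₁ : ℝ, 1 ≤ C₁ ∧
      ∀ p ∈ Set.Icc (-1 - δ₀) (1 + δ₀) ×ˢ Set.Icc (0 : ℝ) C₁⁻¹,
        (δ₁ - δ₀) / 10 ≤ g δ₁ p) := by
  have hb : ∀ p, f p ≤ 1 := by
    intro p
    by_cases h : p ∈ Δ
    · exact h_upper p h
    · rw [h_supp p h]; norm_num
  have hint : ∀ (E t a b : ℝ), IntervalIntegrable (fun s => f (E - s, t)) volume a b := by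
    intro E t a b
    rw [intervalIntegrable_iff]
    refine Measure.integrableOn_of_bounded (M := 1) measure_Ioc_lt_top.ne
      (hf_meas.comp ((measurable_const.sub measurable_id).prodMk
        measurable_const)).aestronglyMeasurable (ae_of_all _ fun s => ?_)
    rw [Real.norm_eq_abs, abs_of_nonneg (hf_nonneg _)]
    exact hb _
  constructor
  · intro δ₀ h0 h1 p
    rw [hg]
    calc ∫ s in (-δ₀)..δ₀, f (p.1 - s, p.2) ≤ ∫ _s in (-δ₀)..δ₀, (1:ℝ) := by
          apply intervalIntegral.integral_mono_on (by linarith) (hint _ _ _ _)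
            intervalIntegrable_const
          intro s _; exact hb _
      _ = 2 * δ₀ := by rw [intervalIntegral.integral_const]; simp; ring
  · intro δ₀ δ₁ h0 h01 h1
    refine ⟨5 / (δ₁ - δ₀), ?_, ?_⟩
    · rw [le_div_iff₀ (by linarith)]; linarith
    rintro ⟨E, t⟩ ⟨hE, ht⟩
    simp only [Set.mem_Icc] at hE ht
    have hE1 : -1 - δ₀ ≤ E := hE.1
    have hE2 : E ≤ 1 + δ₀ := hE.2
    have ht0 : 0 ≤ t := ht.1
    have ht1 : t ≤ (δ₁ - δ₀) / 5 := by
      have h5 := ht.2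
      rwa [inv_div] at h5
    set l := max (E - (1 - t)) (-δ₁) with hl
    set r := min (E + (1 - t)) δ₁ with hr
    have hd : 0 < δ₁ - δ₀ := by linarith
    have ht5 : t < 1 := by linarith
    have hll : -δ₁ ≤ l := le_max_right _ _
    have hrr : r ≤ δ₁ := min_le_right _ _
    have hlr : l ≤ r := by
      apply max_le <;> apply le_min <;> linarith
    have hgap : 4 * (δ₁ - δ₀) / 5 ≤ r - l := by
      rcases max_cases (E - (1 - t)) (-δ₁) with ⟨hl', _⟩ | ⟨hl', _⟩ <;>
        rcases min_cases (E + (1 - t)) δ₁ with ⟨hr', _⟩ | ⟨hr', _⟩ <;>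
        rw [hl, hr, hl', hr'] <;> linarith
    have hmem : ∀ s ∈ Set.Icc l r, (E - s, t) ∈ Δ := by
      intro s hs
      have hs1 : E - (1 - t) ≤ s := le_trans (le_max_left _ _) hs.1
      have hs2 : s ≤ E + (1 - t) := le_trans hs.2 (min_le_left _ _)
      rw [hΔ, Set.mem_setOf_eq]
      dsimp only
      refine ⟨abs_le.mpr ⟨by linarith, by linarith⟩, ht0, ?_⟩
      have h1' : -(1 - t) ≤ E - s := by linarith
      have h2' : E - s ≤ 1 - t := by linarith
      nlinarith [mul_nonneg (by linarith : (0:ℝ) ≤ 1 - t - (E - s))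
        (by linarith : (0:ℝ) ≤ 1 - t + (E - s)), mul_nonneg ht0 (by linarith : (0:ℝ) ≤ 1 - t)]
    rw [hg]
    have step1 : (δ₁ - δ₀) / 10 ≤ ∫ s in l..r, f (E - s, t) := by
      calc (δ₁ - δ₀) / 10 ≤ (r - l) * (1 / 8) := by nlinarith
        _ = ∫ _s in l..r, (1 / 8 : ℝ) := by rw [intervalIntegral.integral_const]; simp
        _ ≤ ∫ s in l..r, f (E - s, t) := by
            apply intervalIntegral.integral_mono_on hlr intervalIntegrable_const (hint _ _ _ _)
            intro s hs
            exact h_lower _ (hmem s hs)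
    refine step1.trans (intervalIntegral.integral_mono_interval hll hlr hrr
      (ae_of_all _ fun s => hf_nonneg _) (hint _ _ _ _))
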